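/- arXiv:1109.3137 — 2 statements merged into one kernel-verified Lean document; each statement's English description precedes it below -/
import Mathlib

section
/- If the completion Ḡ of an edge-weighted graph G is weakly connected, then Ḡ is totally disconnected as a topological space. -/
open UniformSpace Filter Topology
open scoped ENNReal

noncomputable section

/-- A locally finite edge-weighted (resistance) graph. -/
structure WGraph (V : Type*) where
  Adj : V → V → Prop
  symm : ∀ u v, Adj u v → Adj v u
  loopless : ∀ v, ¬ Adj v v
  R : V → V → ℝ
  Rsymm : ∀ u v, R u v = R v u
  Rpos : ∀ u v, Adj u v → 0 < R u v
  locFin : ∀ v, {u | Adj u v}.Finite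

namespace WGraph

variable {V : Type*} (G : WGraph V)

/-- The set of edges, as unordered pairs of vertices. -/
def edgeSet : Set (Sym2 V) := {e | ∃ u v, G.Adj u v ∧ e = s(u, v)}

/-- The set of total lengths of finite paths joining `u` to `v`. -/
def pathLengths (u v : V) : Set ℝ :=
  {L | ∃ (n : ℕ) (p : ℕ → V), p 0 = u ∧ p n = v ∧
        (∀ k < n, G.Adj (p k) (p (k + 1))) ∧
        L = ∑ k ∈ Finset.range n, G.R (p k) (p (k + 1))}

/-- `G` is connected: any two vertices are joined by a finite path. -/
def Connected : Prop := ∀ u v : V, (G.pathLengths u v).Nonempty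

/-- The metric on the vertex set is the minimal resistance path metric of `G`. -/
def IsPathMetric [MetricSpace V] : Prop :=
  ∀ u v : V, dist u v = sInf (G.pathLengths u v)

/-- Eventually flat functions: the values differ across only finitely many edges. -/
def EventuallyFlat (φ : V → ℝ) : Prop :=
  {p : V × V | G.Adj p.1 p.2 ∧ φ p.1 ≠ φ p.2}.Finite

open Classical in
/-- The conductance: the reciprocal resistance on edges, `0` off edges. -/
def cond (u v : V) : ℝ := if G.Adj u v then (G.R u v)⁻¹ else 0

/-- `f` is harmonic at `v`: its value is the conductance-weighted average of the
values at the adjacent vertices. -/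
def HarmonicAt (f : V → ℝ) (v : V) : Prop :=
  f v = (∑ u ∈ (G.locFin v).toFinset, G.cond u v)⁻¹ *
          ∑ u ∈ (G.locFin v).toFinset, G.cond u v * f u

/-- The weighted `ℓ²(μ)` inner product. -/
def winner (μ : V → ℝ) (f g : V → ℝ) : ℝ := ∑' v, f v * g v * μ v

/-- The bilinear (energy) form associated to conductances `C`. -/
def Bform (C : V → V → ℝ) (f g : V → ℝ) : ℝ :=
  (1 / 2) * ∑' p : V × V, C p.1 p.2 * (f p.1 - f p.2) * (g p.1 - g p.2)

/-- The formal Laplacian `Δ_μ`. -/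
def lap (C : V → V → ℝ) (μ : V → ℝ) (f : V → ℝ) (v : V) : ℝ :=
  (1 / μ v) * ∑' u, C u v * (f v - f u)

/-- The (possibly infinite) energy of `f`. -/
def energy (C : V → V → ℝ) (f : V → ℝ) : ℝ≥0∞ :=
  (1 / 2) * ∑' p : V × V, ENNReal.ofReal (C p.1 p.2 * (f p.1 - f p.2) ^ 2)

variable [MetricSpace V]

/-- A path in the completion `Ḡ` joining `x` and `y`: a two-sided sequence of
vertices (stationary steps are allowed, so this encodes finite paths, rays and
double rays) converging to `x` and `y` at its two ends. -/
structure CPath (x y : Completion V) where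
  p : ℤ → V
  step : ∀ k, p k = p (k + 1) ∨ G.Adj (p k) (p (k + 1))
  tendsto_left : Tendsto (fun n : ℕ => ((p (-(n : ℤ)) : V) : Completion V)) atTop (nhds x)
  tendsto_right : Tendsto (fun n : ℕ => ((p (n : ℤ) : V) : Completion V)) atTop (nhds y)

end WGraph

/-- The path `γ` uses (contains) the edge `e`. -/
def WGraph.CPath.uses {V : Type*} [MetricSpace V] {G : WGraph V}
    {x y : Completion V} (γ : G.CPath x y) (e : Sym2 V) : Prop :=
  ∃ k : ℤ, γ.p k ≠ γ.p (k + 1) ∧ e = s(γ.p k, γ.p (k + 1))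

namespace WGraph

variable {V : Type*} (G : WGraph V) [MetricSpace V]

/-- The completion `Ḡ` is weakly connected: any two distinct points admit a
finite set of edges met by every path joining them. -/
def WeaklyConnected : Prop :=
  ∀ x y : Completion V, x ≠ y →
    ∃ W : Set (Sym2 V), W.Finite ∧ W ⊆ G.edgeSet ∧
      ∀ γ : G.CPath x y, ∃ e ∈ W, γ.uses e

end WGraph


section Aux

/-- In a metric space, any two points of a preconnected set are joined by an
`ε`-chain (with points anywhere in the space). -/
lemma exists_eps_chain {X : Type*} [MetricSpace X] {S : Set X} (hS : IsPreconnected S)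
    {x y : X} (hx : x ∈ S) (hy : y ∈ S) {ε : ℝ} (hε : 0 < ε) :
    ∃ n, ∃ f : ℕ → X, f 0 = x ∧ f n = y ∧ ∀ k < n, dist (f k) (f (k + 1)) < ε := by
  set Rset : Set X :=
    {z | ∃ n, ∃ f : ℕ → X, f 0 = x ∧ f n = z ∧ ∀ k < n, dist (f k) (f (k + 1)) < ε} with hRset
  have hext : ∀ z ∈ Rset, ∀ w : X, dist z w < ε → w ∈ Rset := by
    rintro z ⟨n, f, h0, h1, hstep⟩ w hzw
    refine ⟨n + 1, fun k => if k ≤ n then f k else w, by simp [h0], ?_, ?_⟩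
    · simp
    · intro k hk
      rcases Nat.lt_or_ge k n with h | h
      · simp only [if_pos (le_of_lt h), if_pos (by omega : k + 1 ≤ n)]
        exact hstep k h
      · have hkn : k = n := by omega
        subst hkn
        simp only [if_pos le_rfl, if_neg (by omega : ¬ k + 1 ≤ k)]
        rw [h1]; exact hzw
  have hopen : IsOpen Rset := by
    rw [Metric.isOpen_iff]
    intro z hz
    exact ⟨ε, hε, fun w hw => hext z hz w (by rw [dist_comm]; exact Metric.mem_ball.1 hw)⟩
  have hopenc : IsOpen Rsetᶜ := by
    rw [Metric.isOpen_iff]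
    intro z hz
    refine ⟨ε, hε, fun w hw hwR => hz (hext w hwR z (Metric.mem_ball.1 hw))⟩
  by_contra h
  have hxR : x ∈ Rset := ⟨0, fun _ => x, rfl, rfl, fun k hk => absurd hk (Nat.not_lt_zero k)⟩
  obtain ⟨z, -, hz1, hz2⟩ := hS Rset Rsetᶜ hopen hopenc
    (by rw [Set.union_compl_self]; exact Set.subset_univ S) ⟨x, hx, hxR⟩ ⟨y, hy, h⟩
  exact hz2 hz1

namespace WGraph

variable {V : Type*} (G : WGraph V)

lemma pathLengths_nonneg {u v : V} {L : ℝ} (h : L ∈ G.pathLengths u v) : 0 ≤ L := by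
  obtain ⟨n, p, -, -, hadj, rfl⟩ := h
  exact Finset.sum_nonneg fun k hk => le_of_lt (G.Rpos _ _ (hadj k (Finset.mem_range.1 hk)))

lemma pathLengths_bddBelow (u v : V) : BddBelow (G.pathLengths u v) :=
  ⟨0, fun _ hL => G.pathLengths_nonneg hL⟩

/-- Glue a sequence of short paths between consecutive waypoints `c k` into a single
infinite walk `q`, with block-index function `κ`. -/
lemma glue [MetricSpace V] (hmet : G.IsPathMetric)
    (c : ℕ → V) (η : ℕ → ℝ) (E : ℝ)
    (hpath : ∀ k, ∃ L ∈ G.pathLengths (c k) (c (k + 1)), L ≤ η k)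
    (hE : ∀ k, η k ≤ E) :
    ∃ (q : ℕ → V) (κ : ℕ → ℕ),
      q 0 = c 0 ∧
      (∀ i, q i = q (i + 1) ∨ (G.Adj (q i) (q (i + 1)) ∧ G.R (q i) (q (i + 1)) ≤ E)) ∧
      (∀ i, dist (c (κ i)) (q i) ≤ η (κ i)) ∧
      Filter.Tendsto κ Filter.atTop Filter.atTop := by
  classical
  choose L hL hLη using hpath
  choose n P h0 h1 hadj hsum using hL
  set B : ℕ → ℕ := fun m => ∑ k ∈ Finset.range m, max (n k) 1 with hB
  have hB0 : B 0 = 0 := by simp [hB]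
  have hBsucc : ∀ m, B (m + 1) = B m + max (n m) 1 := fun m => Finset.sum_range_succ _ m
  have hBmono : StrictMono B := strictMono_nat_of_lt_succ fun m => by rw [hBsucc]; omega
  have hBle : ∀ m, m ≤ B m := by
    intro m
    calc m = ∑ _k ∈ Finset.range m, 1 := by simp
    _ ≤ B m := Finset.sum_le_sum fun k _ => le_max_right _ _
  set κ : ℕ → ℕ := fun i => Nat.findGreatest (fun k => B k ≤ i) i with hκ
  have hκ1 : ∀ i, B (κ i) ≤ i := fun i =>
    Nat.findGreatest_spec (P := fun k => B k ≤ i) (Nat.zero_le i) (hB0.le.trans (Nat.zero_le i))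
  have hκ2 : ∀ i, i < B (κ i + 1) := by
    intro i
    by_contra h
    push_neg at h
    exact Nat.findGreatest_is_greatest (Nat.lt_succ_self _) (le_trans (hBle _) h) h
  have hκuniq : ∀ i k, B k ≤ i → i < B (k + 1) → κ i = k := by
    intro i k h1' h2'
    have ha : κ i < k + 1 := hBmono.lt_iff_lt.mp (lt_of_le_of_lt (hκ1 i) h2')
    have hb : k < κ i + 1 := hBmono.lt_iff_lt.mp (lt_of_le_of_lt h1' (hκ2 i))
    omega
  set q : ℕ → V := fun i => P (κ i) (min (i - B (κ i)) (n (κ i))) with hq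
  have hqdef : ∀ i, q i = P (κ i) (min (i - B (κ i)) (n (κ i))) := fun i => rfl
  have hstepclaim : ∀ i, q i = q (i + 1) ∨
      ∃ j, j < n (κ i) ∧ q i = P (κ i) j ∧ q (i + 1) = P (κ i) (j + 1) := by
    intro i
    have hik : B (κ i) ≤ i := hκ1 i
    have hik2 : i < B (κ i + 1) := hκ2 i
    rcases Nat.lt_or_ge (i + 1) (B (κ i + 1)) with hlt | hge
    · have hκi1 : κ (i + 1) = κ i := hκuniq (i + 1) (κ i) (by omega) hlt
      rcases Nat.lt_or_ge (i - B (κ i)) (n (κ i)) with hj | hj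
      · right
        refine ⟨i - B (κ i), hj, ?_, ?_⟩
        · rw [hqdef i, min_eq_left (le_of_lt hj)]
        · rw [hqdef (i + 1), hκi1]
          have h' : (i + 1) - B (κ i) = (i - B (κ i)) + 1 := by omega
          rw [h', min_eq_left (by omega)]
      · left
        rw [hqdef i, hqdef (i + 1), hκi1, min_eq_right hj, min_eq_right (by omega)]
    · have heq : i + 1 = B (κ i + 1) := by omega
      have hκi1 : κ (i + 1) = κ i + 1 :=
        hκuniq (i + 1) (κ i + 1) (by omega) (by rw [hBsucc (κ i + 1)]; omega)
      have hq1 : q (i + 1) = P (κ i) (n (κ i)) := by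
        rw [hqdef (i + 1), hκi1]
        have h' : (i + 1) - B (κ i + 1) = 0 := by omega
        rw [h']
        simp only [Nat.zero_min]
        rw [h0, h1]
      have hiB : i - B (κ i) = max (n (κ i)) 1 - 1 := by
        have := hBsucc (κ i); omega
      rcases Nat.eq_zero_or_pos (n (κ i)) with h00 | hpos
      · left
        rw [hq1, h00, hqdef i]
        rw [h00] at hiB ⊢
        simp [hiB]
      · right
        refine ⟨n (κ i) - 1, by omega, ?_, ?_⟩
        · rw [hqdef i, hiB, max_eq_left hpos, min_eq_left (by omega)]
        · rw [hq1]; congr 1; omega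
  have hRsum : ∀ k j, j < n k → G.R (P k j) (P k (j + 1)) ≤ η k := by
    intro k j hj
    calc G.R (P k j) (P k (j + 1))
        ≤ ∑ a ∈ Finset.range (n k), G.R (P k a) (P k (a + 1)) :=
          Finset.single_le_sum
            (fun a ha => le_of_lt (G.Rpos _ _ (hadj k a (Finset.mem_range.1 ha))))
            (Finset.mem_range.2 hj)
      _ = L k := (hsum k).symm
      _ ≤ η k := hLη k
  refine ⟨q, κ, ?_, ?_, ?_, ?_⟩
  · have hκ0 : κ 0 = 0 := hκuniq 0 0 (by omega) (by rw [hBsucc, hB0]; omega)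
    rw [hqdef 0, hκ0, hB0]
    simp only [Nat.sub_zero, Nat.zero_min]
    exact h0 0
  · intro i
    rcases hstepclaim i with h | ⟨j, hj, hji, hji1⟩
    · exact Or.inl h
    · right
      rw [hji, hji1]
      exact ⟨hadj (κ i) j hj, le_trans (hRsum (κ i) j hj) (hE (κ i))⟩
  · intro i
    rw [hqdef i, hmet]
    have hmem : (∑ a ∈ Finset.range (min (i - B (κ i)) (n (κ i))), G.R (P (κ i) a) (P (κ i) (a + 1)))
        ∈ G.pathLengths (c (κ i)) (P (κ i) (min (i - B (κ i)) (n (κ i)))) :=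
      ⟨min (i - B (κ i)) (n (κ i)), P (κ i), h0 (κ i), rfl,
        fun a ha => hadj (κ i) a (lt_of_lt_of_le ha (min_le_right _ _)), rfl⟩
    refine le_trans (csInf_le (G.pathLengths_bddBelow _ _) hmem) ?_
    calc (∑ a ∈ Finset.range (min (i - B (κ i)) (n (κ i))), G.R (P (κ i) a) (P (κ i) (a + 1)))
        ≤ ∑ a ∈ Finset.range (n (κ i)), G.R (P (κ i) a) (P (κ i) (a + 1)) :=
          Finset.sum_le_sum_of_subset_of_nonneg
            (Finset.range_subset_range.2 (min_le_right _ _))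
            (fun a ha _ => le_of_lt (G.Rpos _ _ (hadj (κ i) a (Finset.mem_range.1 ha))))
      _ = L (κ i) := (hsum (κ i)).symm
      _ ≤ η (κ i) := hLη (κ i)
  · apply Filter.tendsto_atTop_atTop.2
    intro k
    refine ⟨B k, fun i hi => ?_⟩
    have : k < κ i + 1 := hBmono.lt_iff_lt.mp (lt_of_le_of_lt hi (hκ2 i))
    omega

end WGraph

end Aux

/-- a weakly connected completion is totally disconnected. -/
theorem weaklyConnected_totallyDisconnected {V : Type*} [MetricSpace V] [Countable V]
    (G : WGraph V) (hmet : G.IsPathMetric) (hconn : G.Connected)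
    (hw : G.WeaklyConnected) :
    TotallyDisconnectedSpace (UniformSpace.Completion V) := by
  classical
  constructor
  rintro S - hS x hx y hy
  by_contra hxy
  obtain ⟨W, hWfin, hWedge, hWsep⟩ := hw x y hxy
  -- a positive lower bound for resistances of edges in `W`
  set Rf : Sym2 V → ℝ := Sym2.lift ⟨G.R, G.Rsymm⟩ with hRf
  set F : Finset ℝ := hWfin.toFinset.image Rf with hF
  set r : ℝ := if hne : F.Nonempty then F.min' hne else 1 with hr
  have hrpos : 0 < r := by
    rw [hr]
    split_ifs with hne
    · obtain ⟨e, heF, hmin⟩ := Finset.mem_image.1 (F.min'_mem hne)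
      obtain ⟨a, b, hab, heab⟩ := hWedge (hWfin.mem_toFinset.1 heF)
      rw [← hmin, heab, hRf, Sym2.lift_mk]
      exact G.Rpos a b hab
    · exact one_pos
  have hrW : ∀ e ∈ W, r ≤ Rf e := by
    intro e he
    have hmem : Rf e ∈ F := Finset.mem_image_of_mem Rf (hWfin.mem_toFinset.2 he)
    rw [hr, dif_pos ⟨Rf e, hmem⟩]
    exact Finset.min'_le F _ hmem
  set ε : ℝ := r / 5 with hε'
  have hε : 0 < ε := by rw [hε']; linarith
  -- existence of short paths below any bound exceeding the distance
  have hexL : ∀ (a b : V) (t : ℝ), dist a b < t → ∃ L ∈ G.pathLengths a b, L < t := by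
    intro a b t ht
    refine exists_lt_of_csInf_lt (hconn a b) ?_
    rw [← hmet]; exact ht
  -- an ε-chain from x to y in the completion
  obtain ⟨N, f, hf0, hfN, hfstep⟩ := exists_eps_chain hS hx hy hε
  have hN : 0 < N := by
    rcases Nat.eq_zero_or_pos N with h | h
    · rw [h] at hfN
      exact absurd (hf0.symm.trans hfN) hxy
    · exact h
  -- shrinking radii
  set ρ : ℕ → ℝ := fun k => min ε (1 / (k + 1)) with hρ
  have hρpos : ∀ k, 0 < ρ k := fun k => lt_min hε (by positivity)
  have hρle : ∀ k, ρ k ≤ ε := fun k => min_le_left _ _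
  have hρanti : ∀ k, ρ (k + 1) ≤ ρ k := by
    intro k
    refine min_le_min le_rfl (one_div_le_one_div_of_le (by positivity) ?_)
    push_cast; linarith
  have hρ0 : Filter.Tendsto ρ Filter.atTop (nhds 0) :=
    squeeze_zero (fun k => (hρpos k).le) (fun k => min_le_right _ _)
      tendsto_one_div_add_atTop_nhds_zero_nat
  -- approximating vertices
  have hdense : DenseRange ((↑·) : V → Completion V) := UniformSpace.Completion.denseRange_coe
  have hpick : ∀ (z : Completion V) (t : ℝ), 0 < t → ∃ a : V, dist z ((a : V) : Completion V) < t :=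
    fun z t ht => hdense.exists_dist_lt z ht
  choose w hwx using fun k => hpick x (ρ k) (hρpos k)
  choose u huy using fun k => hpick y (ρ k) (hρpos k)
  choose v' hv' using fun k => hpick (f k) ε hε
  set v : ℕ → V := fun k => if k = 0 then w 0 else v' k with hv
  have hvf : ∀ k, dist (f k) ((v k : V) : Completion V) < ε := by
    intro k
    rw [hv]; dsimp only
    split_ifs with h
    · rw [h, hf0]; exact lt_of_lt_of_le (hwx 0) (hρle 0)
    · exact hv' k
  have hdistVC : ∀ a b : V, dist ((a : V) : Completion V) ((b : V) : Completion V) = dist a b :=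
    fun a b => UniformSpace.Completion.dist_eq a b
  -- the left (x-side) waypoints are `w`, with bounds `3ρ`
  have hpathm : ∀ k, ∃ L ∈ G.pathLengths (w k) (w (k + 1)), L ≤ 3 * ρ k := by
    intro k
    have hd : dist (w k) (w (k + 1)) < 2 * ρ k := by
      rw [← hdistVC]
      calc dist ((w k : V) : Completion V) ((w (k + 1) : V) : Completion V)
          ≤ dist x ((w k : V) : Completion V) + dist x ((w (k + 1) : V) : Completion V) :=
            dist_triangle_left _ _ _
        _ < ρ k + ρ (k + 1) := add_lt_add (hwx k) (hwx (k + 1))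
        _ ≤ ρ k + ρ k := by have := hρanti k; linarith
        _ = 2 * ρ k := by ring
    obtain ⟨L, hL, hL'⟩ := hexL (w k) (w (k + 1)) (3 * ρ k)
      (lt_of_lt_of_le hd (by have := hρpos k; linarith))
    exact ⟨L, hL, hL'.le⟩
  have hEm : ∀ k, 3 * ρ k ≤ 4 * ε := fun k => by have := hρle k; linarith
  -- the right (chain + y-side) waypoints
  set cp : ℕ → V := fun k => if k < N then v k else u (k - N) with hcp
  set ηp : ℕ → ℝ := fun k => if k < N then 4 * ε else 3 * ρ (k - N) with hηp
  have hcpf : ∀ k, k ≤ N → dist (f k) ((cp k : V) : Completion V) < ε := by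
    intro k hk
    rw [hcp]; dsimp only
    split_ifs with h
    · exact hvf k
    · have hkN : k = N := by omega
      subst hkN
      simp only [Nat.sub_self]
      rw [hfN]
      exact lt_of_lt_of_le (huy 0) (hρle 0)
  have hcpy : ∀ k, N ≤ k → dist y ((cp k : V) : Completion V) < ρ (k - N) := by
    intro k hk
    rw [hcp]; dsimp only
    rw [if_neg (by omega)]
    exact huy (k - N)
  have hpathp : ∀ k, ∃ L ∈ G.pathLengths (cp k) (cp (k + 1)), L ≤ ηp k := by
    intro k
    rcases Nat.lt_or_ge k N with h | h
    · have hd : dist (cp k) (cp (k + 1)) < 3 * ε := by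
        rw [← hdistVC]
        calc dist ((cp k : V) : Completion V) ((cp (k + 1) : V) : Completion V)
            ≤ dist ((cp k : V) : Completion V) (f k) + dist (f k) (f (k + 1)) +
                dist (f (k + 1)) ((cp (k + 1) : V) : Completion V) := dist_triangle4 _ _ _ _
          _ < ε + ε + ε := by
              refine add_lt_add (add_lt_add ?_ (hfstep k h)) (hcpf (k + 1) (by omega))
              rw [dist_comm]; exact hcpf k h.le
          _ = 3 * ε := by ring
      obtain ⟨L, hL, hL'⟩ := hexL (cp k) (cp (k + 1)) (4 * ε)
        (lt_of_lt_of_le hd (by linarith))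
      refine ⟨L, hL, ?_⟩
      rw [hηp]; dsimp only
      rw [if_pos h]
      exact hL'.le
    · have hd : dist (cp k) (cp (k + 1)) < 2 * ρ (k - N) := by
        rw [← hdistVC]
        calc dist ((cp k : V) : Completion V) ((cp (k + 1) : V) : Completion V)
            ≤ dist y ((cp k : V) : Completion V) + dist y ((cp (k + 1) : V) : Completion V) :=
              dist_triangle_left _ _ _
          _ < ρ (k - N) + ρ (k + 1 - N) := add_lt_add (hcpy k h) (hcpy (k + 1) (by omega))
          _ ≤ ρ (k - N) + ρ (k - N) := by
              have h' : k + 1 - N = (k - N) + 1 := by omega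
              rw [h']
              have := hρanti (k - N); linarith
          _ = 2 * ρ (k - N) := by ring
      obtain ⟨L, hL, hL'⟩ := hexL (cp k) (cp (k + 1)) (3 * ρ (k - N))
        (lt_of_lt_of_le hd (by have := hρpos (k - N); linarith))
      refine ⟨L, hL, ?_⟩
      rw [hηp]; dsimp only
      rw [if_neg (by omega)]
      exact hL'.le
  have hEp : ∀ k, ηp k ≤ 4 * ε := by
    intro k
    rw [hηp]; dsimp only
    split_ifs with h
    · exact le_refl _
    · exact hEm (k - N)
  -- glue
  obtain ⟨qm, κm, hqm0, hqmstep, hqmdist, hκmt⟩ := G.glue hmet w (fun k => 3 * ρ k) (4 * ε) hpathm hEm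
  obtain ⟨qp, κp, hqp0, hqpstep, hqpdist, hκpt⟩ := G.glue hmet cp ηp (4 * ε) hpathp hEp
  have hq0eq : qp 0 = qm 0 := by
    rw [hqp0, hqm0, hcp]; dsimp only
    rw [if_pos hN, hv]; dsimp only
    rw [if_pos rfl]
  -- convergence of the two glued walks
  have htm : Filter.Tendsto (fun i => ((qm i : V) : Completion V)) Filter.atTop (nhds x) := by
    rw [tendsto_iff_dist_tendsto_zero]
    apply squeeze_zero (fun i => dist_nonneg) (g := fun i => 4 * ρ (κm i))
    · intro i
      calc dist ((qm i : V) : Completion V) x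
          ≤ dist ((qm i : V) : Completion V) ((w (κm i) : V) : Completion V) +
              dist ((w (κm i) : V) : Completion V) x := dist_triangle _ _ _
        _ ≤ 3 * ρ (κm i) + ρ (κm i) := by
            refine add_le_add ?_ ?_
            · rw [hdistVC, dist_comm]; exact hqmdist i
            · rw [dist_comm]; exact (hwx (κm i)).le
        _ = 4 * ρ (κm i) := by ring
    · have h4 : Filter.Tendsto (fun k => 4 * ρ k) Filter.atTop (nhds 0) := by
        have h5 := hρ0.const_mul 4; rwa [mul_zero] at h5
      exact h4.comp hκmt
  have htp : Filter.Tendsto (fun i => ((qp i : V) : Completion V)) Filter.atTop (nhds y) := by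
    rw [tendsto_iff_dist_tendsto_zero]
    have hg : Filter.Tendsto (fun k => ηp k + dist y ((cp k : V) : Completion V))
        Filter.atTop (nhds 0) := by
      apply squeeze_zero'
      · filter_upwards with k
        have : 0 ≤ ηp k := by
          rw [hηp]; dsimp only
          split_ifs
          · linarith
          · have := hρpos (k - N); linarith
        have := dist_nonneg (x := y) (y := ((cp k : V) : Completion V))
        linarith
      · filter_upwards [Filter.eventually_ge_atTop N] with k hk
        show ηp k + dist y ((cp k : V) : Completion V) ≤ 4 * ρ (k - N)
        have h1 : ηp k = 3 * ρ (k - N) := by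
          rw [hηp]; dsimp only; rw [if_neg (by omega)]
        have h2 := (hcpy k hk).le
        linarith
      · have h4 : Filter.Tendsto (fun m => 4 * ρ m) Filter.atTop (nhds 0) := by
          have h5 := hρ0.const_mul 4; rwa [mul_zero] at h5
        exact h4.comp (tendsto_sub_atTop_nat N)
    apply squeeze_zero (fun i => dist_nonneg)
      (g := fun i => ηp (κp i) + dist y ((cp (κp i) : V) : Completion V))
    · intro i
      calc dist ((qp i : V) : Completion V) y
          ≤ dist ((qp i : V) : Completion V) ((cp (κp i) : V) : Completion V) +
              dist ((cp (κp i) : V) : Completion V) y := dist_triangle _ _ _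
        _ ≤ ηp (κp i) + dist y ((cp (κp i) : V) : Completion V) := by
            refine add_le_add ?_ (by rw [dist_comm])
            rw [hdistVC, dist_comm]; exact hqpdist i
    · exact hg.comp hκpt
  -- assemble the two-sided path
  set p : ℤ → V := fun i => if 0 ≤ i then qp i.toNat else qm (-i).toNat with hp
  have hpnat : ∀ nn : ℕ, p (nn : ℤ) = qp nn := by
    intro nn
    rw [hp]; dsimp only
    rw [if_pos (Int.natCast_nonneg nn)]
    congr 1 <;> omega
  have hpneg : ∀ nn : ℕ, p (-(nn : ℤ)) = qm nn := by
    intro nn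
    rcases Nat.eq_zero_or_pos nn with h | h
    · subst h
      rw [show (-(0:ℕ) : ℤ) = ((0:ℕ) : ℤ) by omega, hpnat, hq0eq]
    · rw [hp]; dsimp only
      rw [if_neg (by omega)]
      congr 1 <;> omega
  have hpstep : ∀ k : ℤ, p k = p (k + 1) ∨
      (G.Adj (p k) (p (k + 1)) ∧ G.R (p k) (p (k + 1)) ≤ 4 * ε) := by
    intro k
    rcases le_or_gt 0 k with hk | hk
    · have e1 : p k = qp k.toNat := by rw [hp]; dsimp only; rw [if_pos hk]
      have e2 : p (k + 1) = qp (k.toNat + 1) := by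
        rw [hp]; dsimp only
        rw [if_pos (by omega)]
        congr 1 <;> omega
      rw [e1, e2]
      exact hqpstep k.toNat
    · have e1 : p k = qm ((-(k + 1)).toNat + 1) := by
        rw [hp]; dsimp only
        rw [if_neg (by omega)]
        congr 1 <;> omega
      have e2 : p (k + 1) = qm ((-(k + 1)).toNat) := by
        rcases le_or_gt 0 (k + 1) with h | h
        · have h0' : k + 1 = 0 := by omega
          rw [h0', show ((-(0:ℤ)).toNat) = 0 by omega]
          rw [show (0 : ℤ) = ((0:ℕ) : ℤ) by omega, hpnat, hq0eq]
        · rw [hp]; dsimp only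
          rw [if_neg (by omega)]
      rw [e1, e2]
      rcases hqmstep ((-(k + 1)).toNat) with h | ⟨h1, h2⟩
      · exact Or.inl h.symm
      · exact Or.inr ⟨G.symm _ _ h1, by rw [G.Rsymm]; exact h2⟩
  -- the CPath and the contradiction
  have hγ : ∃ γ : G.CPath x y, γ.p = p := by
    refine ⟨⟨p, fun k => (hpstep k).imp id And.left, ?_, ?_⟩, rfl⟩
    · exact htm.congr fun nn => by rw [hpneg nn]
    · exact htp.congr fun nn => by rw [hpnat nn]
  obtain ⟨γ, hγp⟩ := hγ
  obtain ⟨e, heW, k, hkne, hke⟩ := hWsep γ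
  rw [hγp] at hkne hke
  have hbound : G.R (p k) (p (k + 1)) ≤ 4 * ε := by
    rcases hpstep k with h | ⟨_, h2⟩
    · exact absurd h hkne
    · exact h2
  have hrle : r ≤ G.R (p k) (p (k + 1)) := by
    have h' := hrW e heW
    rw [hke, hRf, Sym2.lift_mk] at h'
    exact h'
  rw [hε'] at hbound
  linarith
end
end

section
/- Suppose Ḡ₀, the completion of G under the metric d₀ induced by edge weights R₀, is weakly connected, and let R₁ be edge weights with R₁(u,v) ≤ R₀(u,v) for every edge. Then the pseudometric d₁ on Ḡ₀ induced by R₁ is a metric; moreover, if (Ḡ₀, d₀) is compact then the identity map (Ḡ₀,d₀) → (Ḡ₀,d₁) is a homeomorphism. -/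
open UniformSpace Filter Topology
open scoped ENNReal

noncomputable section

namespace WGraph

variable {V : Type*}

lemma mem_pathLengths_nonneg (G : WGraph V) {u v : V} {L : ℝ}
    (h : L ∈ G.pathLengths u v) : 0 ≤ L := by
  obtain ⟨n, p, -, -, hstep, rfl⟩ := h
  exact Finset.sum_nonneg fun k hk => (G.Rpos _ _ (hstep k (Finset.mem_range.1 hk))).le

lemma bddBelow_pathLengths (G : WGraph V) (u v : V) : BddBelow (G.pathLengths u v) :=
  ⟨0, fun _ hL => G.mem_pathLengths_nonneg hL⟩

lemma exists_path_lt (G : WGraph V) {u v : V} {b : ℝ}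
    (hne : (G.pathLengths u v).Nonempty) (hb : sInf (G.pathLengths u v) < b) :
    ∃ (n : ℕ) (p : ℕ → V), p 0 = u ∧ p n = v ∧ (∀ k < n, G.Adj (p k) (p (k + 1))) ∧
      ∑ k ∈ Finset.range n, G.R (p k) (p (k + 1)) < b := by
  obtain ⟨L, hL, hLb⟩ := exists_lt_of_csInf_lt hne hb
  obtain ⟨n, p, h0, h1, h2, rfl⟩ := hL
  exact ⟨n, p, h0, h1, h2, hLb⟩

lemma dist_le_path [MetricSpace V] (G : WGraph V) (hmet : G.IsPathMetric)
    {n : ℕ} {p : ℕ → V} (hstep : ∀ k < n, G.Adj (p k) (p (k + 1))) {j : ℕ} (hj : j ≤ n) :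
    dist (p 0) (p j) ≤ ∑ k ∈ Finset.range n, G.R (p k) (p (k + 1)) := by
  have h1 : (∑ k ∈ Finset.range j, G.R (p k) (p (k + 1))) ∈ G.pathLengths (p 0) (p j) :=
    ⟨j, p, rfl, rfl, fun k hk => hstep k (lt_of_lt_of_le hk hj), rfl⟩
  calc dist (p 0) (p j) ≤ ∑ k ∈ Finset.range j, G.R (p k) (p (k + 1)) := by
        rw [hmet]; exact csInf_le (G.bddBelow_pathLengths _ _) h1
    _ ≤ ∑ k ∈ Finset.range n, G.R (p k) (p (k + 1)) :=
        Finset.sum_le_sum_of_subset_of_nonneg (Finset.range_subset_range.2 hj)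
          (fun k hk _ => (G.Rpos _ _ (hstep k (Finset.mem_range.1 hk))).le)

end WGraph
namespace WGraph

variable {V : Type*}

lemma exists_concat (m : ℕ → ℕ) (hm : ∀ n, 1 ≤ m n) (q : ℕ → ℕ → V)
    (hglue : ∀ n, q n (m n) = q (n + 1) 0) :
    ∃ r : ℕ → V, r 0 = q 0 0 ∧
      (∀ k : ℕ, ∃ n j, j < m n ∧ r k = q n j ∧ r (k + 1) = q n (j + 1)) ∧
      (∀ N k : ℕ, (∑ i ∈ Finset.range N, m i) ≤ k →
        ∃ n, N ≤ n ∧ ∃ j ≤ m n, r k = q n j) := by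
  classical
  set S : ℕ → ℕ := fun n => ∑ i ∈ Finset.range n, m i with hS
  have hSsucc : ∀ n, S (n + 1) = S n + m n := fun n => Finset.sum_range_succ m n
  have hSmono : StrictMono S := strictMono_nat_of_lt_succ fun n => by
    rw [hSsucc]; have := hm n; omega
  have hSle : ∀ n, n ≤ S n := fun n => by
    calc n = ∑ _i ∈ Finset.range n, 1 := by simp
    _ ≤ S n := Finset.sum_le_sum fun i _ => hm i
  set blk : ℕ → ℕ := fun k => Nat.findGreatest (fun n => S n ≤ k) k with hblk
  have hS0 : S 0 = 0 := by simp [hS]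
  have hblk_le : ∀ k, S (blk k) ≤ k := fun k =>
    Nat.findGreatest_spec (P := fun n => S n ≤ k) (Nat.zero_le k) (by omega)
  have hblk_lt : ∀ k, k < S (blk k + 1) := fun k => by
    by_contra h
    push_neg at h
    have h1 : blk k + 1 ≤ k := le_trans (hSle _) h
    have h2 : blk k + 1 ≤ blk k := Nat.le_findGreatest h1 h
    omega
  have hblk_ge : ∀ N k, S N ≤ k → N ≤ blk k := fun N k h =>
    Nat.le_findGreatest (le_trans (hSle N) h) h
  have hblkS : ∀ n, blk (S n) = n := fun n => by
    refine le_antisymm ?_ (hblk_ge n (S n) le_rfl)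
    exact hSmono.le_iff_le.mp (hblk_le (S n))
  refine ⟨fun k => q (blk k) (k - S (blk k)), ?_, ?_, ?_⟩
  · have : blk 0 = 0 := by
      have := hblk_le 0
      have h2 := hSle (blk 0)
      omega
    simp [this, hS0]
  · intro k
    set n := blk k with hn
    have h1 : S n ≤ k := hblk_le k
    have h2 : k < S n + m n := by have := hblk_lt k; rwa [hSsucc] at this
    refine ⟨n, k - S n, by omega, rfl, ?_⟩
    rcases Nat.lt_or_ge (k + 1) (S n + m n) with hc | hc
    · have hb : blk (k + 1) = n := by
        refine le_antisymm ?_ (hblk_ge n (k + 1) (by omega))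
        by_contra hlt
        push_neg at hlt
        have : S (n + 1) ≤ S (blk (k + 1)) := hSmono.monotone hlt
        have h3 := hblk_le (k + 1)
        rw [hSsucc] at this
        omega
      show q (blk (k+1)) (k + 1 - S (blk (k+1))) = q n (k - S n + 1)
      rw [hb]
      congr 1
      omega
    · have hc' : k + 1 = S (n + 1) := by rw [hSsucc]; omega
      have hb : blk (k + 1) = n + 1 := by rw [hc', hblkS]
      have hj : k - S n + 1 = m n := by omega
      show q (blk (k+1)) (k + 1 - S (blk (k+1))) = q n (k - S n + 1)
      rw [hb, hj]
      have hz : k + 1 - S (n + 1) = 0 := by omega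
      rw [hz, ← hglue n]
  · intro N k hNk
    have h1 : S (blk k) ≤ k := hblk_le k
    have h2 : k < S (blk k) + m (blk k) := by have := hblk_lt k; rwa [hSsucc] at this
    exact ⟨blk k, hblk_ge N k hNk, k - S (blk k), by omega, rfl⟩

end WGraph
namespace WGraph

variable {V : Type*}

lemma exists_ray [MetricSpace V] (G : WGraph V) (hmet : G.IsPathMetric)
    (hconn : G.Connected) (G1 : WGraph V) (hadj : G1.Adj = G.Adj)
    (hle : ∀ u v, G.Adj u v → G1.R u v ≤ G.R u v)
    (z : Completion V) (a : V) (δ : ℝ) (hδ : 0 < δ)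
    (ha : dist (↑a : Completion V) z < δ / 4) :
    ∃ r : ℕ → V, r 0 = a ∧ (∀ k, r k = r (k + 1) ∨ G.Adj (r k) (r (k + 1))) ∧
      (∀ k, r k ≠ r (k + 1) → G1.R (r k) (r (k + 1)) < δ) ∧
      Tendsto (fun n : ℕ => ((r n : V) : Completion V)) atTop (nhds z) := by
  classical
  set ε : ℕ → ℝ := fun n => min (δ / 8) ((1 / 2 : ℝ) ^ n) with hε
  have hεpos : ∀ n, 0 < ε n := fun n => lt_min (by linarith) (by positivity)
  have hεδ : ∀ n, ε n ≤ δ / 8 := fun n => min_le_left _ _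
  have hεhalf : ∀ n, ε n ≤ (1 / 2 : ℝ) ^ n := fun n => min_le_right _ _
  have hch : ∀ n : ℕ, ∃ v : V, dist ((v : V) : Completion V) z < ε n := by
    intro n
    obtain ⟨v, hv⟩ := Metric.denseRange_iff.1
      UniformSpace.Completion.denseRange_coe z (ε n) (hεpos n)
    exact ⟨v, by rwa [dist_comm]⟩
  set w : ℕ → V := fun n => if n = 0 then a else Classical.choose (hch n) with hwdef
  have hw0 : w 0 = a := by simp [hwdef]
  have hwz : ∀ n, 1 ≤ n → dist ((w n : V) : Completion V) z < ε n := by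
    intro n hn
    simp only [hwdef, if_neg (by omega : ¬ n = 0)]
    exact Classical.choose_spec (hch n)
  have hwz4 : ∀ n, dist ((w n : V) : Completion V) z < δ / 4 := by
    intro n
    rcases Nat.eq_zero_or_pos n with h | h
    · rw [h, hw0]; exact ha
    · exact lt_of_lt_of_le (hwz n h) (le_trans (hεδ n) (by linarith))
  have hwdist : ∀ n, dist (w n) (w (n + 1)) < δ / 4 + ε (n + 1) := by
    intro n
    rw [← UniformSpace.Completion.dist_eq]
    calc dist ((w n : V) : Completion V) ((w (n+1) : V) : Completion V)
        ≤ dist ((w n : V) : Completion V) z + dist ((w (n+1) : V) : Completion V) z := by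
          rw [dist_comm ((w (n+1) : V) : Completion V) z]; exact dist_triangle _ _ _
      _ < δ / 4 + ε (n + 1) := by
          have := hwz4 n; have := hwz (n + 1) (by omega); linarith
  have hblock : ∀ n : ℕ, ∃ (mn : ℕ) (p : ℕ → V), p 0 = w n ∧ p mn = w (n + 1) ∧
      (∀ k < mn, G.Adj (p k) (p (k + 1))) ∧
      ∑ k ∈ Finset.range mn, G.R (p k) (p (k + 1)) < dist (w n) (w (n + 1)) + ε n := by
    intro n
    exact G.exists_path_lt (hconn _ _) (by rw [← hmet]; linarith [hεpos n])
  choose m' q' hq0 hq1 hqadj hqsum using hblock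
  set m : ℕ → ℕ := fun n => m' n + 1 with hm
  set q : ℕ → ℕ → V := fun n j => q' n (min j (m' n)) with hq
  have hQ0 : ∀ n, q n 0 = w n := fun n => by
    simp only [hq, Nat.zero_min]; exact hq0 n
  have hQend : ∀ n, q n (m n) = w (n + 1) := fun n => by
    simp only [hq, hm]
    rw [min_eq_right (Nat.le_succ _)]; exact hq1 n
  have hglue : ∀ n, q n (m n) = q (n + 1) 0 := fun n => by rw [hQend, hQ0]
  -- the sum bound for individual edges
  have hedge : ∀ n, ∀ j < m' n, G1.R (q' n j) (q' n (j + 1)) < δ := by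
    intro n j hj
    have h1 : G1.R (q' n j) (q' n (j + 1)) ≤ G.R (q' n j) (q' n (j + 1)) :=
      hle _ _ (hqadj n j hj)
    have h2 : G.R (q' n j) (q' n (j + 1)) ≤
        ∑ k ∈ Finset.range (m' n), G.R (q' n k) (q' n (k + 1)) :=
      Finset.single_le_sum
        (fun k hk => (G.Rpos _ _ (hqadj n k (Finset.mem_range.1 hk))).le)
        (Finset.mem_range.2 hj)
    have h3 := hqsum n
    have h4 := hwdist n
    have h5 := hεδ n
    have h6 := hεδ (n + 1)
    linarith
  obtain ⟨r, hr0, hrstep, hrtail⟩ := exists_concat m (fun n => Nat.succ_le_succ (Nat.zero_le _)) q hglue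
  refine ⟨r, by rw [hr0, hQ0, hw0], ?_, ?_, ?_⟩
  · intro k
    obtain ⟨n, j, hj, e1, e2⟩ := hrstep k
    rw [e1, e2]
    rcases Nat.lt_or_ge j (m' n) with hc | hc
    · right
      have d1 : q n j = q' n j := by simp only [hq]; rw [min_eq_left hc.le]
      have d2 : q n (j + 1) = q' n (j + 1) := by simp only [hq]; rw [min_eq_left hc]
      rw [d1, d2]; exact hqadj n j hc
    · left
      have hjeq : j = m' n := by simp only [hm] at hj; omega
      simp only [hq, hjeq]
      rw [min_eq_left le_rfl, min_eq_right (Nat.le_succ _)]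
  · intro k hne
    obtain ⟨n, j, hj, e1, e2⟩ := hrstep k
    rw [e1, e2] at hne ⊢
    rcases Nat.lt_or_ge j (m' n) with hc | hc
    · have d1 : q n j = q' n j := by simp only [hq]; rw [min_eq_left hc.le]
      have d2 : q n (j + 1) = q' n (j + 1) := by simp only [hq]; rw [min_eq_left hc]
      rw [d1, d2]; exact hedge n j hc
    · exfalso
      apply hne
      have hjeq : j = m' n := by simp only [hm] at hj; omega
      simp only [hq, hjeq]
      rw [min_eq_left le_rfl, min_eq_right (Nat.le_succ _)]
  · rw [Metric.tendsto_atTop]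
    intro ε' hε'
    obtain ⟨N₁, hN₁⟩ := exists_pow_lt_of_lt_one (by linarith : (0:ℝ) < ε' / 4)
      (by norm_num : (1 / 2 : ℝ) < 1)
    set N₀ := N₁ + 1 with hN₀def
    have hN₀1 : 1 ≤ N₀ := by omega
    have hN₀2 : 4 * (1 / 2 : ℝ) ^ N₀ < ε' := by
      have : ((1:ℝ) / 2) ^ N₀ ≤ (1 / 2) ^ N₁ :=
        pow_le_pow_of_le_one (by norm_num) (by norm_num) (by omega)
      linarith
    refine ⟨∑ i ∈ Finset.range N₀, m i, fun k hk => ?_⟩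
    obtain ⟨n, hn, j, hjle, hrk⟩ := hrtail N₀ k hk
    rw [hrk]
    have h1n : 1 ≤ n := le_trans hN₀1 hn
    set j' := min j (m' n) with hj'
    have hj'le : j' ≤ m' n := min_le_right _ _
    have hqnj : q n j = q' n j' := rfl
    have hd1 : dist (q' n 0) (q' n j') ≤
        ∑ k ∈ Finset.range (m' n), G.R (q' n k) (q' n (k + 1)) :=
      G.dist_le_path hmet (hqadj n) hj'le
    have hd2 : dist ((q' n j' : V) : Completion V) z ≤
        dist ((q' n j' : V) : Completion V) ((w n : V) : Completion V) +
          dist ((w n : V) : Completion V) z := dist_triangle _ _ _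
    have hd3 : dist ((q' n j' : V) : Completion V) ((w n : V) : Completion V)
        = dist (q' n 0) (q' n j') := by
      rw [UniformSpace.Completion.dist_eq, hq0 n, dist_comm]
    have hb1 : dist (w n) (w (n + 1)) < 2 * (1 / 2 : ℝ) ^ n := by
      rw [← UniformSpace.Completion.dist_eq]
      have t1 := hwz n h1n
      have t2 := hwz (n + 1) (by omega)
      have t3 := hεhalf n
      have t4 : ε (n + 1) ≤ (1 / 2 : ℝ) ^ n := by
        refine le_trans (hεhalf (n + 1)) ?_
        exact pow_le_pow_of_le_one (by norm_num) (by norm_num) (by omega)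
      calc dist ((w n : V) : Completion V) ((w (n+1) : V) : Completion V)
          ≤ dist ((w n : V) : Completion V) z + dist ((w (n+1) : V) : Completion V) z := by
            rw [dist_comm ((w (n+1) : V) : Completion V) z]; exact dist_triangle _ _ _
        _ < 2 * (1 / 2 : ℝ) ^ n := by linarith
    have hpow : ((1:ℝ) / 2) ^ n ≤ (1 / 2) ^ N₀ :=
      pow_le_pow_of_le_one (by norm_num) (by norm_num) hn
    have := hqsum n
    have := hεhalf n
    have := hwz n h1n
    rw [hqnj]
    calc dist ((q' n j' : V) : Completion V) z
        ≤ dist (q' n 0) (q' n j') + dist ((w n : V) : Completion V) z := by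
          rw [← hd3]; exact hd2
      _ < ε' := by linarith
  
end WGraph
/-- if the completion under `d₀` is weakly connected and `R₁ ≤ R₀`,
then the pseudometric induced on the completion by `R₁` is a metric; if the
completion is moreover compact, it induces the same topology. -/
theorem smaller_weights_metric {V : Type*} [MetricSpace V] [Countable V]
    (G : WGraph V) (hmet : G.IsPathMetric) (hconn : G.Connected)
    (hw : G.WeaklyConnected)
    (G1 : WGraph V) (hadj : G1.Adj = G.Adj)
    (hle : ∀ u v, G.Adj u v → G1.R u v ≤ G.R u v)
    (D1 : UniformSpace.Completion V → UniformSpace.Completion V → ℝ)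
    (hcont : Continuous fun p : UniformSpace.Completion V × UniformSpace.Completion V =>
      D1 p.1 p.2)
    (hD1 : ∀ u v : V, D1 (↑u) (↑v) = sInf (G1.pathLengths u v)) :
    (∀ x y : UniformSpace.Completion V, D1 x y = 0 → x = y) ∧
      (CompactSpace (UniformSpace.Completion V) →
        ∀ s : Set (UniformSpace.Completion V), IsOpen s ↔
          ∀ x ∈ s, ∃ ε > 0, {y | D1 x y < ε} ⊆ s) := by
  classical
  have hD1nonneg : ∀ x y : Completion V, 0 ≤ D1 x y := by
    intro x y
    refine UniformSpace.Completion.induction_on₂ x y ?_ ?_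
    · exact isClosed_le continuous_const hcont
    · intro a b
      rw [hD1]
      exact Real.sInf_nonneg fun L hL => G1.mem_pathLengths_nonneg hL
  have hG1conn : ∀ u v : V, (G1.pathLengths u v).Nonempty := by
    intro u v
    obtain ⟨L, n, p, h0, h1, h2, -⟩ := hconn u v
    exact ⟨_, n, p, h0, h1, fun k hk => by rw [hadj]; exact h2 k hk, rfl⟩
  have hD1self : ∀ x : Completion V, D1 x x = 0 := by
    intro x
    refine UniformSpace.Completion.induction_on x ?_ ?_
    · exact isClosed_eq (hcont.comp (continuous_id.prodMk continuous_id)) continuous_const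
    · intro a
      rw [hD1]
      refine le_antisymm ?_ (Real.sInf_nonneg fun L hL => G1.mem_pathLengths_nonneg hL)
      refine csInf_le (G1.bddBelow_pathLengths _ _) ?_
      exact ⟨0, fun _ => a, rfl, rfl, fun k hk => absurd hk (Nat.not_lt_zero k), by simp⟩
  have key : ∀ x y : Completion V, D1 x y = 0 → x = y := by
    intro x y h0
    by_contra hne
    obtain ⟨W, hWfin, hWsub, hWmeet⟩ := hw x y hne
    set wt : Sym2 V → ℝ := Sym2.lift ⟨G1.R, fun a b => G1.Rsymm a b⟩ with hwt
    set F := hWfin.toFinset with hF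
    set δ : ℝ := if hFne : F.Nonempty then F.inf' hFne wt else 1 with hδdef
    have hδpos : 0 < δ := by
      rw [hδdef]
      split_ifs with hFne
      · rw [Finset.lt_inf'_iff]
        intro e he
        have heW : e ∈ W := (Set.Finite.mem_toFinset hWfin).1 he
        obtain ⟨a, b, hab, rfl⟩ := hWsub heW
        simp only [hwt, Sym2.lift_mk]
        exact G1.Rpos a b (by rw [hadj]; exact hab)
      · norm_num
    have hopen : IsOpen {q : Completion V × Completion V | D1 q.1 q.2 < δ} :=
      isOpen_lt hcont continuous_const
    have hxy : (x, y) ∈ {q : Completion V × Completion V | D1 q.1 q.2 < δ} := by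
      simp only [Set.mem_setOf_eq, h0]; exact hδpos
    obtain ⟨ρ, hρpos, hball⟩ := Metric.isOpen_iff.1 hopen (x, y) hxy
    have hρ'pos : 0 < min ρ (δ / 4) := lt_min hρpos (by linarith)
    obtain ⟨u, hu⟩ := Metric.denseRange_iff.1
      UniformSpace.Completion.denseRange_coe x (min ρ (δ / 4)) hρ'pos
    obtain ⟨v, hv⟩ := Metric.denseRange_iff.1
      UniformSpace.Completion.denseRange_coe y (min ρ (δ / 4)) hρ'pos
    rw [dist_comm] at hu hv
    have hux : dist ((u : V) : Completion V) x < δ / 4 :=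
      lt_of_lt_of_le hu (min_le_right _ _)
    have hvy : dist ((v : V) : Completion V) y < δ / 4 :=
      lt_of_lt_of_le hv (min_le_right _ _)
    have hmem : (((u : V) : Completion V), ((v : V) : Completion V)) ∈ Metric.ball (x, y) ρ := by
      rw [Metric.mem_ball, Prod.dist_eq]
      exact max_lt (lt_of_lt_of_le hu (min_le_left _ _)) (lt_of_lt_of_le hv (min_le_left _ _))
    have hDuv : D1 ↑u ↑v < δ := hball hmem
    have hsInf : sInf (G1.pathLengths u v) < δ := by rw [← hD1]; exact hDuv
    obtain ⟨M, pm, hpm0, hpmM, hpmadj, hpmsum⟩ := G1.exists_path_lt (hG1conn u v) hsInf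
    have hpmadjG : ∀ k < M, G.Adj (pm k) (pm (k + 1)) := fun k hk => by
      rw [← hadj]; exact hpmadj k hk
    have hpmedge : ∀ k < M, G1.R (pm k) (pm (k + 1)) < δ := by
      intro k hk
      have := Finset.single_le_sum (f := fun k => G1.R (pm k) (pm (k + 1)))
        (fun i hi => (G1.Rpos _ _ (hpmadj i (Finset.mem_range.1 hi))).le)
        (Finset.mem_range.2 hk)
      try simp only at this
      linarith
    obtain ⟨bw, hbw0, hbwstep, hbwedge, hbwtend⟩ :=
      G.exists_ray hmet hconn G1 hadj hle x u δ hδpos hux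
    obtain ⟨fw, hfw0, hfwstep, hfwedge, hfwtend⟩ :=
      G.exists_ray hmet hconn G1 hadj hle y v δ hδpos hvy
    set f : ℕ → V := fun k => if k < M then pm k else fw (k - M) with hfdef
    have hf : ∀ k, f k = if k < M then pm k else fw (k - M) := fun _ => rfl
    have hfu : f 0 = u := by
      rcases Nat.eq_zero_or_pos M with h | h
      · rw [hf, if_neg (by omega)]
        have h2 : 0 - M = 0 := by omega
        rw [h2, hfw0, ← hpmM, h, hpm0]
      · rw [hf, if_pos h, hpm0]
    have hfprop : ∀ k, (f k = f (k + 1) ∨ G.Adj (f k) (f (k + 1))) ∧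
        (f k ≠ f (k + 1) → G1.R (f k) (f (k + 1)) < δ) := by
      intro k
      rcases Nat.lt_or_ge (k + 1) M with hk1 | hk1
      · have e1 : f k = pm k := by rw [hf, if_pos (by omega)]
        have e2 : f (k + 1) = pm (k + 1) := by rw [hf, if_pos hk1]
        rw [e1, e2]
        exact ⟨Or.inr (hpmadjG k (by omega)), fun _ => hpmedge k (by omega)⟩
      rcases Nat.lt_or_ge k M with hk2 | hk2
      · have e1 : f k = pm k := by rw [hf, if_pos hk2]
        have e2 : f (k + 1) = pm (k + 1) := by
          rw [hf, if_neg (by omega)]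
          have h2 : k + 1 - M = 0 := by omega
          have hM : k + 1 = M := by omega
          rw [h2, hfw0, ← hpmM, hM]
        rw [e1, e2]
        exact ⟨Or.inr (hpmadjG k (by omega)), fun _ => hpmedge k (by omega)⟩
      · have e1 : f k = fw (k - M) := by rw [hf, if_neg (by omega)]
        have e2 : f (k + 1) = fw (k - M + 1) := by
          rw [hf, if_neg (by omega)]
          congr 1
          omega
        rw [e1, e2]
        exact ⟨hfwstep (k - M), hfwedge (k - M)⟩
    have hftend : Tendsto (fun n : ℕ => ((f n : V) : Completion V)) atTop (nhds y) := by
      refine (hfwtend.comp (tendsto_sub_atTop_nat M)).congr' ?_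
      filter_upwards [eventually_ge_atTop M] with n hn
      simp only [Function.comp]
      rw [hf, if_neg (by omega)]
    set p : ℤ → V := fun k => if k < 0 then bw (-k).toNat else f k.toNat with hpdef
    have hp : ∀ k : ℤ, p k = if k < 0 then bw (-k).toNat else f k.toNat := fun _ => rfl
    have hpprop : ∀ k : ℤ, (p k = p (k + 1) ∨ G.Adj (p k) (p (k + 1))) ∧
        (p k ≠ p (k + 1) → G1.R (p k) (p (k + 1)) < δ) := by
      intro k
      rcases le_or_gt 0 k with hk | hk
      · have e1 : p k = f k.toNat := by rw [hp, if_neg (by omega)]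
        have e2 : p (k + 1) = f (k.toNat + 1) := by
          rw [hp, if_neg (by omega)]
          congr 1
          omega
        rw [e1, e2]
        exact hfprop k.toNat
      · have e1 : p k = bw ((-k).toNat - 1 + 1) := by
          rw [hp, if_pos hk]
          congr 1
          omega
        have e2 : p (k + 1) = bw ((-k).toNat - 1) := by
          rcases lt_or_ge (k + 1) 0 with h1 | h1
          · rw [hp, if_pos h1]
            congr 1
            omega
          · have hk1 : k = -1 := by omega
            rw [hp, if_neg (by omega)]
            have h2 : (k + 1).toNat = 0 := by omega
            rw [h2, hfu, ← hbw0]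
            congr 1
            omega
        rw [e1, e2]
        constructor
        · rcases hbwstep ((-k).toNat - 1) with h | h
          · exact Or.inl h.symm
          · exact Or.inr (G.symm _ _ h)
        · intro hne2
          rw [G1.Rsymm]
          exact hbwedge _ fun hh => hne2 hh.symm
    have hpleft : ∀ n : ℕ, p (-(n : ℤ)) = bw n := by
      intro n
      rcases Nat.eq_zero_or_pos n with h | h
      · subst h
        rw [hp, if_neg (by omega)]
        show f ((-((0:ℕ):ℤ)).toNat) = bw 0
        have h2 : ((-((0:ℕ):ℤ)).toNat) = 0 := by simp
        rw [h2, hfu]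
        exact hbw0.symm
      · rw [hp, if_pos (by omega)]
        have h2 : (-(-(n : ℤ))).toNat = n := by omega
        rw [h2]
    have hpright : ∀ n : ℕ, p (n : ℤ) = f n := by
      intro n
      rw [hp, if_neg (by omega)]
      have h2 : ((n : ℤ)).toNat = n := by omega
      rw [h2]
    have tleft : Tendsto (fun n : ℕ => ((p (-(n : ℤ)) : V) : Completion V)) atTop (nhds x) := by
      simp only [hpleft]
      exact hbwtend
    have tright : Tendsto (fun n : ℕ => ((p (n : ℤ) : V) : Completion V)) atTop (nhds y) := by
      simp only [hpright]
      exact hftend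
    set γ : G.CPath x y := ⟨p, fun k => (hpprop k).1, tleft, tright⟩ with hγ
    obtain ⟨e, heW, k, hkne, hkeq⟩ := hWmeet γ
    have hγp : γ.p = p := rfl
    rw [hγp] at hkne hkeq
    have hFne : F.Nonempty := ⟨e, (Set.Finite.mem_toFinset hWfin).2 heW⟩
    have h1 : δ ≤ wt e := by
      rw [hδdef, dif_pos hFne]
      exact Finset.inf'_le _ ((Set.Finite.mem_toFinset hWfin).2 heW)
    have h2 : wt e = G1.R (p k) (p (k + 1)) := by
      rw [hkeq]
      simp only [hwt, Sym2.lift_mk]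
    have h3 := (hpprop k).2 hkne
    rw [h2] at h1
    linarith
  refine ⟨key, ?_⟩
  intro hcomp s
  constructor
  · intro hs x hx
    by_contra hcon
    push_neg at hcon
    have hstep : ∀ n : ℕ, ∃ y, D1 x y ≤ 1 / (n + 1) ∧ y ∉ s := by
      intro n
      have hpos : (0 : ℝ) < 1 / (n + 1) := by positivity
      obtain ⟨y, hy1, hy2⟩ := Set.not_subset.1 (hcon (1 / (n + 1)) hpos)
      exact ⟨y, le_of_lt hy1, hy2⟩
    set K : ℕ → Set (Completion V) := fun n => {y | D1 x y ≤ 1 / (n + 1)} ∩ sᶜ with hK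
    have hKclosed : ∀ n, IsClosed (K n) := fun n =>
      (isClosed_le (hcont.comp (continuous_const.prodMk continuous_id))
        continuous_const).inter hs.isClosed_compl
    have hKne : ∀ n, (K n).Nonempty := fun n => by
      obtain ⟨y, h1, h2⟩ := hstep n
      exact ⟨y, h1, h2⟩
    have hKsub : ∀ n, K (n + 1) ⊆ K n := by
      intro n y hy
      obtain ⟨hy1, hy2⟩ := hy
      refine ⟨?_, hy2⟩
      simp only [Set.mem_setOf_eq] at hy1 ⊢
      refine le_trans hy1 ?_
      exact one_div_le_one_div_of_le (by positivity) (by push_cast; linarith)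
    obtain ⟨z, hz⟩ := IsCompact.nonempty_iInter_of_sequence_nonempty_isCompact_isClosed
      K hKsub hKne ((hKclosed 0).isCompact) hKclosed
    have hz1 : ∀ n : ℕ, D1 x z ≤ 1 / (n + 1) := fun n => (Set.mem_iInter.1 hz n).1
    have hz2 : z ∉ s := (Set.mem_iInter.1 hz 0).2
    have hle0 : D1 x z ≤ 0 :=
      ge_of_tendsto' tendsto_one_div_add_atTop_nhds_zero_nat hz1
    have hxz : D1 x z = 0 := le_antisymm hle0 (hD1nonneg x z)
    exact hz2 ((key x z hxz) ▸ hx)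
  · intro hball
    rw [isOpen_iff_mem_nhds]
    intro x hx
    obtain ⟨ε, hεpos, hsub⟩ := hball x hx
    have hopen : IsOpen {y | D1 x y < ε} :=
      isOpen_lt (hcont.comp (continuous_const.prodMk continuous_id)) continuous_const
    have hmem : x ∈ {y | D1 x y < ε} := by
      simp only [Set.mem_setOf_eq, hD1self x]
      exact hεpos
    exact Filter.mem_of_superset (hopen.mem_nhds hmem) hsub
end
end
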